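/- arXiv:2406.15139 — 3 statements merged into one kernel-verified Lean document; each statement's English description precedes it below -/
import Mathlib

section
/- Let a_{ij}(p) := (δ_{ij} + p_i p_j)/p0 with p0 = sqrt(1+|p|^2). Then for all p ∈ ℝ^d, Σ_{k,l,i,j=1}^d p0^2 (δ_{kl} − p_k p_l/p0^2)(δ_{ij} − p_i p_j/p0^2) ∇_p a_{lj} ⊗ ∇_p a_{ki} = 2(I − p⊗p/p0^2) − (2/p0^2)(I − p⊗p/p0^2) + (d−2) (p⊗p)/p0^4; in particular this matrix is ≤ d (I − p⊗p/p0^2) in the Loewner order. -/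
/-- The entries `a_{ij}(p) = (δ_{ij} + p_i p_j)/p₀` of `D(p) = (I + p⊗p)/p₀`. -/
noncomputable def aEntry (d : ℕ) (i j : Fin d) (q : EuclideanSpace ℝ (Fin d)) : ℝ :=
  ((if i = j then (1 : ℝ) else 0) + q i * q j) / Real.sqrt (1 + ‖q‖ ^ 2)

/-- The gradient `∇_p a_{ij}` as a vector in `ℝ^d`. -/
noncomputable def gradA (d : ℕ) (i j : Fin d) (p : EuclideanSpace ℝ (Fin d)) : Fin d → ℝ :=
  fun m => fderiv ℝ (aEntry d i j) p (EuclideanSpace.single m 1)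


namespace GradAAux

variable {d : ℕ}

/-- closed form of the gradient entries -/
noncomputable def G (v : Fin d → ℝ) (r : ℝ) (l j m : Fin d) : ℝ :=
  ((if l = m then (1:ℝ) else 0) * v j + (if j = m then (1:ℝ) else 0) * v l) / r
    - ((if l = j then (1:ℝ) else 0) + v l * v j) * v m / r ^ 3

noncomputable def P (v : Fin d → ℝ) (r : ℝ) (k l : Fin d) : ℝ :=
  (if k = l then (1:ℝ) else 0) - v k * v l / r ^ 2

noncomputable def W (v : Fin d → ℝ) (r : ℝ) (l i m : Fin d) : ℝ :=
  G v r l i m - v i * ((if l = m then (1:ℝ) else 0) * (∑ k, v k * v k)) / r ^ 3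

noncomputable def M (v : Fin d → ℝ) (r : ℝ) (k i m : Fin d) : ℝ :=
  ((if k = m then (1:ℝ) else 0) * v i + (if i = m then (1:ℝ) else 0) * v k
      - (if k = i then (1:ℝ) else 0) * v m) / r ^ 3
    - v k * v i * v m / r ^ 5

lemma sum_delta_left (a : Fin d) (f : Fin d → ℝ) :
    ∑ j, (if a = j then (1:ℝ) else 0) * f j = f a := by
  simp [ite_mul]

lemma sum_delta_right (a : Fin d) (f : Fin d → ℝ) :
    ∑ j, (if j = a then (1:ℝ) else 0) * f j = f a := by
  simp [ite_mul]

lemma G_symm (v : Fin d → ℝ) (r : ℝ) (l j m : Fin d) : G v r l j m = G v r j l m := by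
  unfold G
  rw [show (if l = j then (1:ℝ) else 0) = (if j = l then 1 else 0) by simp [eq_comm]]
  ring

lemma sum_vG (v : Fin d → ℝ) (r : ℝ) (hr : r ^ 2 = 1 + ∑ k, v k * v k) (hr0 : r ≠ 0)
    (l m : Fin d) :
    ∑ j, v j * G v r l j m = (if l = m then (1:ℝ) else 0) * (∑ k, v k * v k) / r := by
  have h : ∀ j, v j * G v r l j m =
      (if l = m then (1:ℝ) else 0) * (1/r) * (v j * v j)
      + (if j = m then (1:ℝ) else 0) * (v l * v j * (1/r))
      - (if l = j then (1:ℝ) else 0) * (v j * v m * (1/r^3))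
      - (v l * v m * (1/r^3)) * (v j * v j) := by
    intro j; unfold G; split_ifs <;> ring
  rw [Finset.sum_congr rfl (fun j _ => h j)]
  simp only [Finset.sum_sub_distrib, Finset.sum_add_distrib, ← Finset.mul_sum,
    sum_delta_right, sum_delta_left]
  set T := ∑ k, v k * v k with hT
  have hT2 : T = r ^ 2 - 1 := by linarith [hr]
  rw [hT2]
  split_ifs <;> field_simp <;> ring

lemma sum_PG (v : Fin d → ℝ) (r : ℝ) (hr : r ^ 2 = 1 + ∑ k, v k * v k) (hr0 : r ≠ 0)
    (l i m : Fin d) :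
    ∑ j, P v r i j * G v r l j m = W v r l i m := by
  have h : ∀ j, P v r i j * G v r l j m =
      (if i = j then (1:ℝ) else 0) * (G v r l j m) - (v i / r^2) * (v j * G v r l j m) :=
    fun j => by unfold P; ring
  rw [Finset.sum_congr rfl (fun j _ => h j)]
  rw [Finset.sum_sub_distrib, sum_delta_left, ← Finset.mul_sum, sum_vG v r hr hr0]
  unfold W
  ring

lemma sum_vW (v : Fin d → ℝ) (r : ℝ) (hr : r ^ 2 = 1 + ∑ k, v k * v k) (hr0 : r ≠ 0)
    (i m : Fin d) :
    ∑ l, v l * W v r l i m =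
      (if i = m then (1:ℝ) else 0) * (∑ k, v k * v k) / r
        - v i * v m * (∑ k, v k * v k) / r ^ 3 := by
  have h : ∀ l, v l * W v r l i m =
      v l * G v r i l m - (if l = m then (1:ℝ) else 0) * (v l * v i * (∑ k, v k * v k) / r ^ 3) :=
    fun l => by unfold W; rw [G_symm v r l i m]; split_ifs <;> ring
  rw [Finset.sum_congr rfl (fun l _ => h l)]
  rw [Finset.sum_sub_distrib, sum_delta_right, sum_vG v r hr hr0]
  ring

lemma sum_PW (v : Fin d → ℝ) (r : ℝ) (hr : r ^ 2 = 1 + ∑ k, v k * v k) (hr0 : r ≠ 0)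
    (k i m : Fin d) :
    ∑ l, P v r k l * W v r l i m = M v r k i m := by
  have h : ∀ l, P v r k l * W v r l i m =
      (if k = l then (1:ℝ) else 0) * (W v r l i m) - (v k / r^2) * (v l * W v r l i m) :=
    fun l => by unfold P; ring
  rw [Finset.sum_congr rfl (fun l _ => h l)]
  rw [Finset.sum_sub_distrib, sum_delta_left, ← Finset.mul_sum, sum_vW v r hr hr0]
  unfold W M G
  set T := ∑ k, v k * v k with hT
  have hT2 : T = r ^ 2 - 1 := by linarith [hr]
  rw [hT2]
  split_ifs <;> field_simp <;> ring

lemma sum_MG (v : Fin d → ℝ) (r : ℝ) (hr : r ^ 2 = 1 + ∑ k, v k * v k) (hr0 : r ≠ 0)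
    (k m n : Fin d) :
    ∑ i, M v r k i m * G v r k i n =
      (if k = m then (1:ℝ) else 0) * (1/r^3)
          * ((if k = n then (1:ℝ) else 0) * (∑ j, v j * v j) / r)
        + (v k / r^3) * G v r k m n
        - (v m / r^3) * G v r k k n
        - (v k * v m / r^5) * ((if k = n then (1:ℝ) else 0) * (∑ j, v j * v j) / r) := by
  have h : ∀ i, M v r k i m * G v r k i n =
      ((if k = m then (1:ℝ) else 0) * (1/r^3)) * (v i * G v r k i n)
      + (if i = m then (1:ℝ) else 0) * ((v k / r^3) * G v r k i n)
      - (if k = i then (1:ℝ) else 0) * ((v m / r^3) * G v r k i n)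
      - (v k * v m / r^5) * (v i * G v r k i n) :=
    fun i => by unfold M; split_ifs <;> ring
  rw [Finset.sum_congr rfl (fun i _ => h i)]
  simp only [Finset.sum_sub_distrib, Finset.sum_add_distrib, ← Finset.mul_sum,
    sum_delta_right, sum_delta_left]
  rw [sum_vG v r hr hr0]

lemma sum_Gkk (v : Fin d → ℝ) (r : ℝ) (n : Fin d) :
    ∑ k, G v r k k n = 2 * v n / r - ((d:ℝ) + ∑ k, v k * v k) * v n / r ^ 3 := by
  have h : ∀ k, G v r k k n =
      (if k = n then (1:ℝ) else 0) * (2 * v k / r)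
        - (v n / r^3) * 1 - (v n / r^3) * (v k * v k) := by
    intro k; unfold G; rw [if_pos rfl]; split_ifs <;> ring
  rw [Finset.sum_congr rfl (fun k _ => h k)]
  simp only [Finset.sum_sub_distrib, ← Finset.mul_sum, sum_delta_right]
  rw [Finset.sum_const, Finset.card_univ, Fintype.card_fin]
  ring

end GradAAux

namespace GradAAux

/-- The final contraction over `k`. -/
lemma sum_final (v : Fin d → ℝ) (r : ℝ) (hr : r ^ 2 = 1 + ∑ k, v k * v k) (hr0 : r ≠ 0)
    (m n : Fin d) :
    ∑ k, r^2 * ((if k = m then (1:ℝ) else 0) * (1/r^3)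
          * ((if k = n then (1:ℝ) else 0) * (∑ j, v j * v j) / r)
        + (v k / r^3) * G v r k m n
        - (v m / r^3) * G v r k k n
        - (v k * v m / r^5) * ((if k = n then (1:ℝ) else 0) * (∑ j, v j * v j) / r))
      = 2 * ((if m = n then (1:ℝ) else 0) - v m * v n / r ^ 2)
        - (2 / r ^ 2) * ((if m = n then (1:ℝ) else 0) - v m * v n / r ^ 2)
        + (((d:ℝ) - 2) / r ^ 4) * (v m * v n) := by
  set T := ∑ j, v j * v j with hT
  have h : ∀ k, r^2 * ((if k = m then (1:ℝ) else 0) * (1/r^3)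
          * ((if k = n then (1:ℝ) else 0) * T / r)
        + (v k / r^3) * G v r k m n
        - (v m / r^3) * G v r k k n
        - (v k * v m / r^5) * ((if k = n then (1:ℝ) else 0) * T / r))
      = (if k = m then (1:ℝ) else 0) * ((if k = n then (1:ℝ) else 0) * (T / r^2))
        + (1/r) * (v k * G v r m k n)
        - (v m / r) * G v r k k n
        - (if k = n then (1:ℝ) else 0) * (v k * (v m * T / r^4)) := by
    intro k
    rw [G_symm v r k m n]
    split_ifs <;> field_simp <;> ring
  rw [Finset.sum_congr rfl (fun k _ => h k)]
  simp only [Finset.sum_sub_distrib, Finset.sum_add_distrib, ← Finset.mul_sum,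
    sum_delta_right, sum_delta_left]
  rw [sum_vG v r hr hr0, sum_Gkk v r n]
  have hT2 : T = r ^ 2 - 1 := by linarith [hr]
  rw [← hT, hT2]
  split_ifs <;> field_simp <;> ring

/-- The grand quadruple sum. -/
lemma quad_sum (v : Fin d → ℝ) (r : ℝ) (hr : r ^ 2 = 1 + ∑ k, v k * v k) (hr0 : r ≠ 0)
    (m n : Fin d) :
    ∑ k, ∑ l, ∑ i, ∑ j,
        (r ^ 2 * P v r k l * P v r i j) * (G v r l j m * G v r k i n)
      = 2 * ((if m = n then (1:ℝ) else 0) - v m * v n / r ^ 2)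
        - (2 / r ^ 2) * ((if m = n then (1:ℝ) else 0) - v m * v n / r ^ 2)
        + (((d:ℝ) - 2) / r ^ 4) * (v m * v n) := by
  have step1 : ∀ k,
      (∑ l, ∑ i, ∑ j, (r ^ 2 * P v r k l * P v r i j) * (G v r l j m * G v r k i n))
        = r^2 * ∑ i, M v r k i m * G v r k i n := by
    intro k
    have h1 : ∀ l i, (∑ j, (r ^ 2 * P v r k l * P v r i j) * (G v r l j m * G v r k i n))
        = (r^2 * P v r k l * G v r k i n) * W v r l i m := by
      intro l i
      rw [← sum_PG v r hr hr0 l i m, Finset.mul_sum]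
      exact Finset.sum_congr rfl fun j _ => by ring
    calc (∑ l, ∑ i, ∑ j, (r ^ 2 * P v r k l * P v r i j) * (G v r l j m * G v r k i n))
        = ∑ l, ∑ i, (r^2 * P v r k l * G v r k i n) * W v r l i m :=
          Finset.sum_congr rfl fun l _ => Finset.sum_congr rfl fun i _ => h1 l i
      _ = ∑ i, ∑ l, (r^2 * P v r k l * G v r k i n) * W v r l i m := Finset.sum_comm
      _ = ∑ i, (r^2 * G v r k i n) * (∑ l, P v r k l * W v r l i m) := by
          refine Finset.sum_congr rfl fun i _ => ?_
          rw [Finset.mul_sum]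
          exact Finset.sum_congr rfl fun l _ => by ring
      _ = ∑ i, (r^2 * G v r k i n) * M v r k i m :=
          Finset.sum_congr rfl fun i _ => by rw [sum_PW v r hr hr0]
      _ = r^2 * ∑ i, M v r k i m * G v r k i n := by
          rw [Finset.mul_sum]; exact Finset.sum_congr rfl fun i _ => by ring
  calc (∑ k, ∑ l, ∑ i, ∑ j, (r ^ 2 * P v r k l * P v r i j) * (G v r l j m * G v r k i n))
      = ∑ k, r^2 * ∑ i, M v r k i m * G v r k i n :=
        Finset.sum_congr rfl fun k _ => step1 k
    _ = ∑ k, r^2 * ((if k = m then (1:ℝ) else 0) * (1/r^3)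
          * ((if k = n then (1:ℝ) else 0) * (∑ j, v j * v j) / r)
        + (v k / r^3) * G v r k m n
        - (v m / r^3) * G v r k k n
        - (v k * v m / r^5) * ((if k = n then (1:ℝ) else 0) * (∑ j, v j * v j) / r)) :=
        Finset.sum_congr rfl fun k _ => by rw [sum_MG v r hr hr0]
    _ = _ := sum_final v r hr hr0 m n

lemma psd_aux (d : ℕ) (T u s r : ℝ) (hT : 0 ≤ T) (hu : 0 ≤ u) (hcs : s ^ 2 ≤ T * u)
    (h1 : d = 1 → s ^ 2 = T * u) (h0 : d = 0 → u = 0)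
    (hr : r ^ 2 = 1 + T) (hr0 : 0 < r) :
    0 ≤ ((d:ℝ) - 2 + 2 / r ^ 2) * u - (((d:ℝ) - 2) / r ^ 2 + (d:ℝ) / r ^ 4) * s ^ 2 := by
  have hr4 : (0:ℝ) < r ^ 4 := by positivity
  have hTne : (0:ℝ) < 1 + T := by linarith
  have key : ((d:ℝ) - 2 + 2 / r ^ 2) * u - (((d:ℝ) - 2) / r ^ 2 + (d:ℝ) / r ^ 4) * s ^ 2
      = ((d:ℝ) * u + (2 * (d:ℝ) - 2 + ((d:ℝ) - 2) * T) * (T * u - s ^ 2)) / r ^ 4 := by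
    rw [show r ^ 4 = (1 + T) ^ 2 from by rw [← hr]; ring, hr]
    field_simp
    ring
  rw [key]
  apply div_nonneg _ hr4.le
  rcases d with _ | _ | d'
  · have hu0 := h0 rfl
    have hs0 : s ^ 2 = 0 := le_antisymm (by nlinarith) (sq_nonneg s)
    simp [hu0, hs0]
  · have he := h1 rfl
    push_cast
    nlinarith [hu]
  · have h3 : 0 ≤ T * u - s ^ 2 := by linarith
    have hd' : (0:ℝ) ≤ (d':ℝ) := Nat.cast_nonneg _
    have h4 : (0:ℝ) ≤ 2 * ((d':ℝ) + 2) - 2 + ((d':ℝ) + 2 - 2) * T := by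
      nlinarith [mul_nonneg hd' hT]
    push_cast
    nlinarith [mul_nonneg h4 h3, hu]

end GradAAux

lemma gradA_eq (d : ℕ) (i j m : Fin d) (p : EuclideanSpace ℝ (Fin d)) :
    gradA d i j p m =
      ((if i = m then (1:ℝ) else 0) * p j + (if j = m then (1:ℝ) else 0) * p i)
          / Real.sqrt (1 + ‖p‖ ^ 2)
        - ((if i = j then (1:ℝ) else 0) + p i * p j) * p m / Real.sqrt (1 + ‖p‖ ^ 2) ^ 3 := by
  set c : ℝ := if i = j then (1:ℝ) else 0 with hc
  set p₀ : ℝ := Real.sqrt (1 + ‖p‖ ^ 2) with hp₀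
  have hpos : (0:ℝ) < 1 + ‖p‖ ^ 2 := by positivity
  have hp₀sq : p₀ ^ 2 = 1 + ‖p‖ ^ 2 := Real.sq_sqrt hpos.le
  have hp₀pos : 0 < p₀ := Real.sqrt_pos.2 hpos
  have hne : p₀ ≠ 0 := hp₀pos.ne'
  have hproj : ∀ k : Fin d, HasFDerivAt (fun q : EuclideanSpace ℝ (Fin d) => q k)
      (EuclideanSpace.proj k : EuclideanSpace ℝ (Fin d) →L[ℝ] ℝ) p := fun k =>
    (EuclideanSpace.proj k : EuclideanSpace ℝ (Fin d) →L[ℝ] ℝ).hasFDerivAt (x := p)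
  have hnum : HasFDerivAt (fun q : EuclideanSpace ℝ (Fin d) => c + q i * q j)
      ((p i) • (EuclideanSpace.proj j : EuclideanSpace ℝ (Fin d) →L[ℝ] ℝ)
        + (p j) • (EuclideanSpace.proj i : EuclideanSpace ℝ (Fin d) →L[ℝ] ℝ)) p :=
    ((hproj i).mul (hproj j)).const_add c
  have hg : HasFDerivAt (fun q : EuclideanSpace ℝ (Fin d) => 1 + ‖q‖ ^ 2)
      (2 • (innerSL ℝ p)) p := ((hasStrictFDerivAt_norm_sq p).hasFDerivAt).const_add 1
  have hsqrt : HasDerivAt Real.sqrt (1 / (2 * p₀)) (1 + ‖p‖ ^ 2) := by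
    simpa [hp₀] using Real.hasDerivAt_sqrt hpos.ne'
  have hg2 : HasFDerivAt (fun q : EuclideanSpace ℝ (Fin d) => Real.sqrt (1 + ‖q‖ ^ 2))
      ((1 / (2 * p₀)) • (2 • (innerSL ℝ p))) p := hsqrt.comp_hasFDerivAt p hg
  have hinv : HasFDerivAt (fun q : EuclideanSpace ℝ (Fin d) => (Real.sqrt (1 + ‖q‖ ^ 2))⁻¹)
      ((-(p₀ ^ 2)⁻¹) • ((1 / (2 * p₀)) • (2 • (innerSL ℝ p)))) p :=
    (hasDerivAt_inv hne).comp_hasFDerivAt p hg2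
  have htot : HasFDerivAt (aEntry d i j)
      ((c + p i * p j) • ((-(p₀ ^ 2)⁻¹) • ((1 / (2 * p₀)) • (2 • (innerSL ℝ p))))
        + (p₀)⁻¹ • ((p i) • (EuclideanSpace.proj j : EuclideanSpace ℝ (Fin d) →L[ℝ] ℝ)
            + (p j) • (EuclideanSpace.proj i : EuclideanSpace ℝ (Fin d) →L[ℝ] ℝ))) p := by
    exact (hnum.mul hinv).congr_of_eventuallyEq
      (Filter.Eventually.of_forall fun q => by simp [aEntry, div_eq_mul_inv, hc])
  have hfd := htot.fderiv
  rw [gradA, hfd]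
  simp only [ContinuousLinearMap.add_apply, ContinuousLinearMap.coe_smul',
    Pi.smul_apply, smul_eq_mul, innerSL_apply_apply, PiLp.proj_apply,
    EuclideanSpace.single_apply]
  have hip : (inner ℝ p (EuclideanSpace.single m 1) : ℝ) = p m := by
    simp [EuclideanSpace.inner_single_right]
  rw [hip]
  simp only [smul_eq_mul, nsmul_eq_mul, Nat.cast_ofNat]
  field_simp
  ring


/-- The identity
`Σ_{k,l,i,j} p₀² (δ_{kl} − p_k p_l/p₀²)(δ_{ij} − p_i p_j/p₀²) ∇a_{lj} ⊗ ∇a_{ki}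
 = 2(I − p⊗p/p₀²) − (2/p₀²)(I − p⊗p/p₀²) + (d−2) p⊗p/p₀⁴`,
and this matrix is `≤ d (I − p⊗p/p₀²)` in the Loewner order. -/

theorem gradA_sum (d : ℕ) (p : EuclideanSpace ℝ (Fin d)) :
    let p₀ : ℝ := Real.sqrt (1 + ‖p‖ ^ 2)
    let pp : Matrix (Fin d) (Fin d) ℝ := Matrix.vecMulVec (fun m => p m) (fun m => p m)
    let S : Matrix (Fin d) (Fin d) ℝ :=
      ∑ k, ∑ l, ∑ i, ∑ j,
        (p₀ ^ 2 * ((if k = l then 1 else 0) - p k * p l / p₀ ^ 2) *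
            ((if i = j then 1 else 0) - p i * p j / p₀ ^ 2)) •
          Matrix.vecMulVec (gradA d l j p) (gradA d k i p)
    S = (2 : ℝ) • ((1 : Matrix (Fin d) (Fin d) ℝ) - (1 / p₀ ^ 2) • pp)
        - (2 / p₀ ^ 2) • ((1 : Matrix (Fin d) (Fin d) ℝ) - (1 / p₀ ^ 2) • pp)
        + (((d : ℝ) - 2) / p₀ ^ 4) • pp
      ∧ Matrix.PosSemidef
          ((d : ℝ) • ((1 : Matrix (Fin d) (Fin d) ℝ) - (1 / p₀ ^ 2) • pp) - S) := by
  intro p₀ pp S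
  have hpos : (0:ℝ) < 1 + ‖p‖ ^ 2 := by positivity
  have hp₀sq : p₀ ^ 2 = 1 + ‖p‖ ^ 2 := Real.sq_sqrt hpos.le
  have hp₀pos : 0 < p₀ := Real.sqrt_pos.2 hpos
  have hne : p₀ ≠ 0 := hp₀pos.ne'
  have hnorm : ‖p‖ ^ 2 = ∑ k, p k * p k := by
    rw [EuclideanSpace.norm_eq, Real.sq_sqrt (by positivity)]
    refine Finset.sum_congr rfl fun k _ => ?_
    rw [Real.norm_eq_abs, sq_abs, sq]
  have hr : p₀ ^ 2 = 1 + ∑ k, (fun a => p a) k * (fun a => p a) k := by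
    simpa [hnorm] using hp₀sq
  have hgrad : ∀ a b c, gradA d a b p c = GradAAux.G (fun k => p k) p₀ a b c := by
    intro a b c
    rw [gradA_eq]
    rfl
  have hS : ∀ m n, S m n =
      2 * ((if m = n then (1:ℝ) else 0) - p m * p n / p₀ ^ 2)
        - (2 / p₀ ^ 2) * ((if m = n then (1:ℝ) else 0) - p m * p n / p₀ ^ 2)
        + (((d:ℝ) - 2) / p₀ ^ 4) * (p m * p n) := by
    intro m n
    have key := GradAAux.quad_sum (fun k => p k) p₀ hr hne m n
    simp only [S, Matrix.sum_apply, Matrix.smul_apply, Matrix.vecMulVec_apply,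
      smul_eq_mul, hgrad]
    exact key
  have hSmat : S = (2 : ℝ) • ((1 : Matrix (Fin d) (Fin d) ℝ) - (1 / p₀ ^ 2) • pp)
      - (2 / p₀ ^ 2) • ((1 : Matrix (Fin d) (Fin d) ℝ) - (1 / p₀ ^ 2) • pp)
      + (((d : ℝ) - 2) / p₀ ^ 4) • pp := by
    ext m n
    rw [hS m n]
    simp only [pp, Matrix.add_apply, Matrix.sub_apply, Matrix.smul_apply, Matrix.one_apply,
      Matrix.vecMulVec_apply, smul_eq_mul]
    ring
  refine ⟨hSmat, ?_⟩
  rw [Matrix.posSemidef_iff_dotProduct_mulVec]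
  constructor
  · -- Hermitian
    apply Matrix.ext
    intro m n
    simp only [Matrix.conjTranspose_apply, Matrix.sub_apply, Matrix.smul_apply,
      Matrix.add_apply, Matrix.one_apply, Matrix.vecMulVec_apply, smul_eq_mul, star_trivial,
      hS, pp, Matrix.sum_apply]
    by_cases h : m = n
    · subst h; ring
    · rw [if_neg h, if_neg (fun hh => h hh.symm)]; ring
  · intro x
    have hrow : ∀ m, (∑ n, ((d : ℝ) • ((1 : Matrix (Fin d) (Fin d) ℝ) - (1 / p₀ ^ 2) • pp) - S) m n * x n)
        = ((d:ℝ) - 2 + 2 / p₀ ^ 2) * x m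
          - ((((d:ℝ) - 2) / p₀ ^ 2 + (d:ℝ) / p₀ ^ 4) * p m) * (∑ n, p n * x n) := by
      intro m
      have h : ∀ n, ((d : ℝ) • ((1 : Matrix (Fin d) (Fin d) ℝ) - (1 / p₀ ^ 2) • pp) - S) m n * x n
          = (if m = n then (1:ℝ) else 0) * (((d:ℝ) - 2 + 2 / p₀ ^ 2) * x n)
            - ((((d:ℝ) - 2) / p₀ ^ 2 + (d:ℝ) / p₀ ^ 4) * p m) * (p n * x n) := by
        intro n
        simp only [Matrix.sub_apply, Matrix.smul_apply, Matrix.one_apply,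
          Matrix.vecMulVec_apply, smul_eq_mul, pp]
        rw [hS m n]
        split_ifs <;> ring
      rw [Finset.sum_congr rfl (fun n _ => h n), Finset.sum_sub_distrib,
        GradAAux.sum_delta_left, ← Finset.mul_sum]
    have hquad : dotProduct (star x)
        (Matrix.mulVec ((d : ℝ) • ((1 : Matrix (Fin d) (Fin d) ℝ) - (1 / p₀ ^ 2) • pp) - S) x)
        = ((d:ℝ) - 2 + 2 / p₀ ^ 2) * (∑ k, x k * x k)
          - (((d:ℝ) - 2) / p₀ ^ 2 + (d:ℝ) / p₀ ^ 4) * (∑ n, p n * x n) ^ 2 := by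
      simp only [dotProduct, Matrix.mulVec, dotProduct, Pi.star_apply,
        star_trivial]
      rw [Finset.sum_congr rfl (fun m _ => by rw [hrow m])]
      have h2 : ∀ m, x m * (((d:ℝ) - 2 + 2 / p₀ ^ 2) * x m
            - ((((d:ℝ) - 2) / p₀ ^ 2 + (d:ℝ) / p₀ ^ 4) * p m) * (∑ n, p n * x n))
          = ((d:ℝ) - 2 + 2 / p₀ ^ 2) * (x m * x m)
            - ((((d:ℝ) - 2) / p₀ ^ 2 + (d:ℝ) / p₀ ^ 4) * (∑ n, p n * x n)) * (p m * x m) := by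
        intro m; ring
      rw [Finset.sum_congr rfl (fun m _ => h2 m), Finset.sum_sub_distrib,
        ← Finset.mul_sum, ← Finset.mul_sum]
      ring
    rw [hquad]
    apply GradAAux.psd_aux d (∑ k, p k * p k) (∑ k, x k * x k) (∑ n, p n * x n) p₀
    · exact Finset.sum_nonneg fun k _ => mul_self_nonneg _
    · exact Finset.sum_nonneg fun k _ => mul_self_nonneg _
    · have := Finset.sum_mul_sq_le_sq_mul_sq Finset.univ (fun k => p k) (fun k => x k)
      calc (∑ n, p n * x n) ^ 2 ≤ (∑ k, p k ^ 2) * (∑ k, x k ^ 2) := this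
        _ = (∑ k, p k * p k) * (∑ k, x k * x k) := by simp [sq]
    · intro hd
      subst hd
      simp only [Fin.sum_univ_one]
      ring
    · intro hd
      subst hd
      simp
    · rw [hp₀sq, hnorm]
    · exact hp₀pos
end

section
/- For all p ∈ ℝ^d and every i ∈ {1,…,d}, writing p̃ := p − e_i and E_i := e_i ⊗ e_i, one has (1/p0^3)(I − p⊗p/p0^2) − (1/p0^5)(2 p_i I − e_i⊗p − p⊗e_i) = (1/p0^5) E_i + (1/p0^5)(|p̃|² I − p̃ ⊗ p̃), and consequently this matrix is positive semidefinite. -/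
lemma dot_vv (d : ℕ) (v w x : Fin d → ℝ) :
    dotProduct x ((Matrix.vecMulVec v w).mulVec x)
      = (∑ m, x m * v m) * (∑ m, w m * x m) := by
  simp only [dotProduct, Matrix.mulVec, Matrix.vecMulVec_apply]
  rw [Finset.sum_mul_sum]
  refine Finset.sum_congr rfl fun m _ => ?_
  rw [Finset.mul_sum]
  refine Finset.sum_congr rfl fun n _ => ?_
  ring

lemma dot_smul_one (d : ℕ) (a : ℝ) (x : Fin d → ℝ) :
    dotProduct x ((a • (1 : Matrix (Fin d) (Fin d) ℝ)).mulVec x)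
      = a * ∑ m, x m ^ 2 := by
  rw [Matrix.smul_mulVec, Matrix.one_mulVec, dotProduct_smul]
  simp [dotProduct, pow_two, Finset.mul_sum]

lemma vvPSD (d : ℕ) (v : Fin d → ℝ) : (Matrix.vecMulVec v v).PosSemidef := by
  rw [Matrix.posSemidef_iff_dotProduct_mulVec]
  constructor
  · ext m n
    simp [Matrix.vecMulVec_apply, Matrix.conjTranspose_apply, mul_comm]
  · intro x
    have h := dot_vv d v v x
    simp only [star_trivial] at *
    rw [h]
    have : ∑ m, x m * v m = ∑ m, v m * x m := by
      exact Finset.sum_congr rfl fun m _ => mul_comm _ _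
    rw [this]
    exact mul_self_nonneg _

lemma csPSD (d : ℕ) (v : Fin d → ℝ) :
    (((∑ m, v m ^ 2) • (1 : Matrix (Fin d) (Fin d) ℝ)) - Matrix.vecMulVec v v).PosSemidef := by
  rw [Matrix.posSemidef_iff_dotProduct_mulVec]
  constructor
  · ext m n
    simp [Matrix.sub_apply, Matrix.vecMulVec_apply, Matrix.conjTranspose_apply,
      Matrix.one_apply, mul_comm]
    rcases eq_or_ne m n with h | h <;> simp [h, eq_comm, mul_comm]
  · intro x
    simp only [star_trivial]
    rw [Matrix.sub_mulVec, dotProduct_sub, dot_smul_one, dot_vv]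
    have hc : ∀ m, x m * v m = v m * x m := fun m => mul_comm _ _
    simp only [hc]
    have h2 := Finset.sum_mul_sq_le_sq_mul_sq Finset.univ v x
    nlinarith [h2]

lemma psd_smul (d : ℕ) (c : ℝ) (hc : 0 ≤ c) {M : Matrix (Fin d) (Fin d) ℝ}
    (hM : M.PosSemidef) : (c • M).PosSemidef := by
  rw [Matrix.posSemidef_iff_dotProduct_mulVec]
  refine ⟨?_, fun x => ?_⟩
  · show (c • M).conjTranspose = c • M
    rw [Matrix.conjTranspose_smul, star_trivial, hM.1]
  rw [Matrix.smul_mulVec, dotProduct_smul]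
  exact mul_nonneg hc ((Matrix.posSemidef_iff_dotProduct_mulVec.mp hM).2 x)

/-- With `p̃ = p − e_i` and `E_i = e_i⊗e_i`,
`(1/p₀³)(I − p⊗p/p₀²) − (1/p₀⁵)(2p_i I − e_i⊗p − p⊗e_i)
  = (1/p₀⁵)E_i + (1/p₀⁵)(|p̃|² I − p̃⊗p̃)`, and this matrix is positive semidefinite. -/
theorem matrix_identity_psd (d : ℕ) (p : Fin d → ℝ) (i : Fin d) :
    let p₀ : ℝ := Real.sqrt (1 + ∑ m, p m ^ 2)
    let e : Fin d → ℝ := Pi.single i 1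
    let pt : Fin d → ℝ := p - e
    let L : Matrix (Fin d) (Fin d) ℝ :=
      (1 / p₀ ^ 3) • ((1 : Matrix (Fin d) (Fin d) ℝ) -
          (1 / p₀ ^ 2) • Matrix.vecMulVec p p)
        - (1 / p₀ ^ 5) • ((2 * p i) • (1 : Matrix (Fin d) (Fin d) ℝ)
            - Matrix.vecMulVec e p - Matrix.vecMulVec p e)
    L = (1 / p₀ ^ 5) • Matrix.vecMulVec e e
        + (1 / p₀ ^ 5) • ((∑ m, pt m ^ 2) • (1 : Matrix (Fin d) (Fin d) ℝ)
            - Matrix.vecMulVec pt pt)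
      ∧ L.PosSemidef := by
  intro p₀ e pt L
  have hS : (0:ℝ) < 1 + ∑ m, p m ^ 2 := by positivity
  have hq2 : p₀ ^ 2 = 1 + ∑ m, p m ^ 2 := Real.sq_sqrt hS.le
  have hqpos : 0 < p₀ := Real.sqrt_pos.mpr hS
  have hq0 : p₀ ≠ 0 := ne_of_gt hqpos
  have hpe : ∑ m, p m * e m = p i := by
    simp [e, Pi.single_apply, mul_ite]
  have he2 : ∑ m, e m ^ 2 = 1 := by
    simp [e, Pi.single_apply, ite_pow]
  have hpt : ∑ m, pt m ^ 2 = p₀ ^ 2 - 2 * p i := by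
    have : ∀ m, pt m ^ 2 = p m ^ 2 - 2 * (p m * e m) + e m ^ 2 := by
      intro m; simp only [pt, Pi.sub_apply]; ring
    rw [Finset.sum_congr rfl fun m _ => this m, Finset.sum_add_distrib,
      Finset.sum_sub_distrib, ← Finset.mul_sum, hpe, he2, hq2]
    ring
  have hid : L = (1 / p₀ ^ 5) • Matrix.vecMulVec e e
      + (1 / p₀ ^ 5) • ((∑ m, pt m ^ 2) • (1 : Matrix (Fin d) (Fin d) ℝ)
          - Matrix.vecMulVec pt pt) := by
    ext m n
    simp only [L, Matrix.sub_apply, Matrix.add_apply, Matrix.smul_apply, Matrix.one_apply,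
      Matrix.vecMulVec_apply, smul_eq_mul, hpt]
    have hptm : ∀ k, pt k = p k - e k := fun k => rfl
    rw [hptm m, hptm n]
    rcases eq_or_ne m n with h | h
    · subst h
      simp only [if_pos rfl]
      field_simp
      ring
    · simp only [if_neg h]
      field_simp
      ring
  refine ⟨hid, ?_⟩
  rw [hid]
  have h5 : (0:ℝ) ≤ 1 / p₀ ^ 5 := by positivity
  exact Matrix.PosSemidef.add (psd_smul d _ h5 (vvPSD d e)) (psd_smul d _ h5 (csPSD d pt))
end

section
/- Let P(x,p) be the 2d×2d block matrix with blocks P₁₁ = (2ε³/(V₀³p₀³))(I − p⊗p/p₀²), P₁₂ = P₂₁ = (ε²/(V₀²p₀²)) I, P₂₂ = (2ε/(V₀p₀))(I + p⊗p), where ε > 0, V₀ = V₀(x) ≥ 1, p₀ = sqrt(1+|p|²). Then diag((ε³/(V₀³p₀³))(I − p⊗p/p₀²), (ε/(V₀p₀))(I + p⊗p)) ≤ P ≤ diag((3ε³/(V₀³p₀³))(I − p⊗p/p₀²), (3ε/(V₀p₀))(I + p⊗p)) in the Loewner order; in particular P is positive definite. -/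
open Matrix

variable {d : ℕ}

private lemma cs_sq (p x : Fin d → ℝ) : (p ⬝ᵥ x)^2 ≤ (p ⬝ᵥ p) * (x ⬝ᵥ x) := by
  have := Finset.sum_mul_sq_le_sq_mul_sq Finset.univ p x
  simpa [dotProduct, sq, Finset.mul_sum] using this

private lemma dot_self_nonneg (x : Fin d → ℝ) : 0 ≤ x ⬝ᵥ x :=
  Finset.sum_nonneg fun i _ => mul_self_nonneg _

private lemma vmv_mulVec (p x : Fin d → ℝ) :
    vecMulVec p p *ᵥ x = (p ⬝ᵥ x) • p := by
  ext i
  simp [vecMulVec, mulVec, dotProduct, Finset.mul_sum, Finset.sum_mul, mul_comm, mul_left_comm]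

/-- Twisted Cauchy–Schwarz: `(u·v)² ≤ (uᵀAu)(vᵀBv)` where `A = I − ppᵀ/q`, `B = I + ppᵀ`. -/
private lemma key (p u v : Fin d → ℝ) {q : ℝ} (hq : q = 1 + p ⬝ᵥ p) :
    (u ⬝ᵥ v)^2 ≤ (u ⬝ᵥ u - (p ⬝ᵥ u)^2 / q) * (v ⬝ᵥ v + (p ⬝ᵥ v)^2) := by
  have hq0 : 0 < q := by have := dot_self_nonneg p; rw [hq]; linarith
  set w : Fin d → ℝ := v + (p ⬝ᵥ v) • p with hw
  have hpw : p ⬝ᵥ w = (p ⬝ᵥ v) * q := by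
    simp [hw, dotProduct_add, dotProduct_smul, hq]; ring
  have huw : u ⬝ᵥ w = u ⬝ᵥ v + (p ⬝ᵥ v) * (p ⬝ᵥ u) := by
    simp [hw, dotProduct_add, dotProduct_smul, dotProduct_comm u p]
  have hww : w ⬝ᵥ w = v ⬝ᵥ v + (p ⬝ᵥ v)^2 + (p ⬝ᵥ v)^2 * q := by
    simp [hw, dotProduct_add, dotProduct_smul, add_dotProduct, smul_dotProduct,
      dotProduct_comm v p, hq]; ring
  -- quadratic in t
  have hquad : ∀ t : ℝ, 0 ≤ (w ⬝ᵥ w - (p ⬝ᵥ w)^2 / q) * (t*t)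
      + (2 * (u ⬝ᵥ w - (p ⬝ᵥ u) * (p ⬝ᵥ w) / q)) * t + (u ⬝ᵥ u - (p ⬝ᵥ u)^2 / q) := by
    intro t
    have hx : (w ⬝ᵥ w - (p ⬝ᵥ w)^2 / q) * (t*t)
        + (2 * (u ⬝ᵥ w - (p ⬝ᵥ u) * (p ⬝ᵥ w) / q)) * t + (u ⬝ᵥ u - (p ⬝ᵥ u)^2 / q)
        = ((u + t • w) ⬝ᵥ (u + t • w)) - (p ⬝ᵥ (u + t • w))^2 / q := by
      simp [dotProduct_add, add_dotProduct, dotProduct_smul, smul_dotProduct,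
        dotProduct_comm w u]
      field_simp
      ring
    rw [hx, sub_nonneg, div_le_iff₀ hq0, hq]
    nlinarith [cs_sq p (u + t • w), dot_self_nonneg (u + t • w)]
  have hd := discrim_le_zero hquad
  rw [discrim] at hd
  have e1 : u ⬝ᵥ w - (p ⬝ᵥ u) * (p ⬝ᵥ w) / q = u ⬝ᵥ v := by
    rw [huw, hpw]; field_simp; ring
  have e2 : w ⬝ᵥ w - (p ⬝ᵥ w)^2 / q = v ⬝ᵥ v + (p ⬝ᵥ v)^2 := by
    rw [hww, hpw]; field_simp; ring
  rw [e1, e2] at hd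
  nlinarith [hd]

private lemma quadA (p x : Fin d → ℝ) (r : ℝ) :
    x ⬝ᵥ (((1 : Matrix (Fin d) (Fin d) ℝ) - r • vecMulVec p p) *ᵥ x)
      = x ⬝ᵥ x - r * (p ⬝ᵥ x)^2 := by
  rw [sub_mulVec, smul_mulVec, vmv_mulVec, one_mulVec, dotProduct_sub, dotProduct_smul,
    dotProduct_smul, dotProduct_comm x p]
  simp [sq]

private lemma quadB (p x : Fin d → ℝ) :
    x ⬝ᵥ (((1 : Matrix (Fin d) (Fin d) ℝ) + vecMulVec p p) *ᵥ x)
      = x ⬝ᵥ x + (p ⬝ᵥ x)^2 := by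
  rw [add_mulVec, vmv_mulVec, one_mulVec, dotProduct_add, dotProduct_smul, dotProduct_comm x p]
  simp [sq]

private lemma hermA (p : Fin d → ℝ) (r : ℝ) :
    ((1 : Matrix (Fin d) (Fin d) ℝ) - r • vecMulVec p p).IsHermitian := by
  ext i j
  simp [conjTranspose_apply, Matrix.sub_apply, Matrix.smul_apply, vecMulVec_apply,
    Matrix.one_apply, mul_comm, eq_comm]

private lemma hermB (p : Fin d → ℝ) :
    ((1 : Matrix (Fin d) (Fin d) ℝ) + vecMulVec p p).IsHermitian := by
  ext i j
  simp [conjTranspose_apply, Matrix.add_apply, vecMulVec_apply, Matrix.one_apply,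
    mul_comm, eq_comm]

private lemma elim_eq (x : Fin d ⊕ Fin d → ℝ) :
    x = Sum.elim (x ∘ Sum.inl) (x ∘ Sum.inr) := by
  funext i; cases i <;> rfl

private lemma blocks_psd (p : Fin d → ℝ) {q a b c : ℝ} (hq : q = 1 + p ⬝ᵥ p)
    (ha : 0 ≤ a) (hc : 0 ≤ c) (hb : b^2 ≤ a * c) :
    Matrix.PosSemidef (Matrix.fromBlocks
      (a • ((1 : Matrix (Fin d) (Fin d) ℝ) - (1/q) • vecMulVec p p))
      (b • (1 : Matrix (Fin d) (Fin d) ℝ)) (b • (1 : Matrix (Fin d) (Fin d) ℝ))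
      (c • ((1 : Matrix (Fin d) (Fin d) ℝ) + vecMulVec p p))) := by
  have hq0 : 0 < q := by have := dot_self_nonneg p; rw [hq]; linarith
  rw [posSemidef_iff_dotProduct_mulVec]
  constructor
  · ext i j
    rcases i with i | i <;> rcases j with j | j <;>
      simp [conjTranspose_apply, vecMulVec_apply, Matrix.one_apply, mul_comm, eq_comm]
  · intro x
    set u : Fin d → ℝ := x ∘ Sum.inl with hu
    set v : Fin d → ℝ := x ∘ Sum.inr with hv
    rw [show star x = x from star_trivial x, show x = Sum.elim u v from elim_eq x]
    simp only [fromBlocks_mulVec, sumElim_dotProduct_sumElim, Sum.elim_comp_inl,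
      Sum.elim_comp_inr, dotProduct_add, smul_mulVec, dotProduct_smul, one_mulVec,
      quadA, quadB, smul_eq_mul]
    have hQA : 0 ≤ u ⬝ᵥ u - 1/q * (p ⬝ᵥ u)^2 ∧ 0 ≤ v ⬝ᵥ v + (p ⬝ᵥ v)^2 ∧
        (u ⬝ᵥ v)^2 ≤ (u ⬝ᵥ u - 1/q * (p ⬝ᵥ u)^2) * (v ⬝ᵥ v + (p ⬝ᵥ v)^2) := by
      have hk := key p u v hq
      have h1 := cs_sq p u
      have h2 := dot_self_nonneg u
      have h3 := dot_self_nonneg v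
      have h4 : (p ⬝ᵥ u)^2 / q ≤ u ⬝ᵥ u := by
        rw [div_le_iff₀ hq0, hq]; nlinarith
      have he : 1/q * (p ⬝ᵥ u)^2 = (p ⬝ᵥ u)^2 / q := by ring
      exact ⟨by rw [he]; linarith, by positivity, by rw [he]; exact hk⟩
    obtain ⟨h5, h6, h7⟩ := hQA
    have hd : v ⬝ᵥ u = u ⬝ᵥ v := dotProduct_comm v u
    rw [hd]
    nlinarith [sq_nonneg (a * (u ⬝ᵥ u - 1/q * (p ⬝ᵥ u)^2) - c * (v ⬝ᵥ v + (p ⬝ᵥ v)^2)),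
      mul_nonneg ha h5, mul_nonneg hc h6, sq_nonneg (u ⬝ᵥ v), sq_nonneg b,
      mul_le_mul hb h7 (sq_nonneg _) (mul_nonneg ha hc)]

private lemma QA_pos (p u : Fin d → ℝ) {q : ℝ} (hq : q = 1 + p ⬝ᵥ p) (hu : u ≠ 0) :
    0 < u ⬝ᵥ u - 1/q * (p ⬝ᵥ u)^2 := by
  have hq0 : 0 < q := by have := dot_self_nonneg p; rw [hq]; linarith
  have h1 := cs_sq p u
  have h2 : 0 < u ⬝ᵥ u := lt_of_le_of_ne (dot_self_nonneg u)
    fun h => hu (dotProduct_self_eq_zero.mp h.symm)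
  rw [sub_pos, one_div, ← div_eq_inv_mul, div_lt_iff₀ hq0, hq]
  nlinarith

private lemma blocks_pd (p : Fin d → ℝ) {q a c : ℝ} (hq : q = 1 + p ⬝ᵥ p)
    (ha : 0 < a) (hc : 0 < c) :
    Matrix.PosDef (Matrix.fromBlocks
      (a • ((1 : Matrix (Fin d) (Fin d) ℝ) - (1/q) • vecMulVec p p)) 0 0
      (c • ((1 : Matrix (Fin d) (Fin d) ℝ) + vecMulVec p p))) := by
  rw [posDef_iff_dotProduct_mulVec]
  constructor
  · ext i j
    rcases i with i | i <;> rcases j with j | j <;>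
      simp [conjTranspose_apply, vecMulVec_apply, Matrix.one_apply, mul_comm, eq_comm]
  · intro x hx
    set u : Fin d → ℝ := x ∘ Sum.inl with hu
    set v : Fin d → ℝ := x ∘ Sum.inr with hv
    have hne : u ≠ 0 ∨ v ≠ 0 := by
      by_contra h
      push_neg at h
      exact hx (by funext i; cases i with
        | inl i => exact congrFun h.1 i
        | inr i => exact congrFun h.2 i)
    rw [show star x = x from star_trivial x, show x = Sum.elim u v from elim_eq x]
    simp only [fromBlocks_mulVec, sumElim_dotProduct_sumElim, Sum.elim_comp_inl,
      Sum.elim_comp_inr, dotProduct_add, smul_mulVec, dotProduct_smul, one_mulVec,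
      quadA, quadB, smul_eq_mul, Matrix.zero_mulVec, add_zero, zero_add]
    have h6 : 0 ≤ v ⬝ᵥ v + (p ⬝ᵥ v)^2 := by
      nlinarith [dot_self_nonneg v, sq_nonneg (p ⬝ᵥ v)]
    rcases hne with hu0 | hv0
    · have h5 := QA_pos p u hq hu0
      have h7 := h6
      nlinarith
    · have h5 : 0 < v ⬝ᵥ v + (p ⬝ᵥ v)^2 := by
        have : 0 < v ⬝ᵥ v := lt_of_le_of_ne (dot_self_nonneg v)
          fun h => hv0 (dotProduct_self_eq_zero.mp h.symm)
        nlinarith [sq_nonneg (p ⬝ᵥ v)]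
      have h7 : 0 ≤ u ⬝ᵥ u - 1/q * (p ⬝ᵥ u)^2 := by
        rcases eq_or_ne u 0 with h0 | hu0
        · rw [h0]; simp
        · exact (QA_pos p u hq hu0).le
      nlinarith

/-- The block matrix `P(x,p)` with blocks
`P₁₁ = (2ε³/(V₀³p₀³))(I − p⊗p/p₀²)`, `P₁₂ = P₂₁ = (ε²/(V₀²p₀²)) I`,
`P₂₂ = (2ε/(V₀p₀))(I + p⊗p)` satisfies the two-sided Loewner bound
`diag((ε³/(V₀³p₀³))(I − p⊗p/p₀²), (ε/(V₀p₀))(I + p⊗p)) ≤ P ≤ 3·(same diag)`,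
and in particular `P` is positive definite. -/
theorem P_sandwich (d : ℕ) (p : Fin d → ℝ) (V₀ ε : ℝ) (hV₀ : 1 ≤ V₀) (hε : 0 < ε) :
    let p₀ : ℝ := Real.sqrt (1 + ∑ i, p i ^ 2)
    let A : Matrix (Fin d) (Fin d) ℝ :=
      (1 : Matrix (Fin d) (Fin d) ℝ) - (1 / p₀ ^ 2) • Matrix.vecMulVec p p
    let B : Matrix (Fin d) (Fin d) ℝ :=
      (1 : Matrix (Fin d) (Fin d) ℝ) + Matrix.vecMulVec p p
    let P : Matrix (Fin d ⊕ Fin d) (Fin d ⊕ Fin d) ℝ :=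
      Matrix.fromBlocks ((2 * ε ^ 3 / (V₀ ^ 3 * p₀ ^ 3)) • A)
        ((ε ^ 2 / (V₀ ^ 2 * p₀ ^ 2)) • (1 : Matrix (Fin d) (Fin d) ℝ))
        ((ε ^ 2 / (V₀ ^ 2 * p₀ ^ 2)) • (1 : Matrix (Fin d) (Fin d) ℝ))
        ((2 * ε / (V₀ * p₀)) • B)
    Matrix.PosSemidef
      (P - Matrix.fromBlocks ((ε ^ 3 / (V₀ ^ 3 * p₀ ^ 3)) • A) 0 0 ((ε / (V₀ * p₀)) • B))
    ∧ Matrix.PosSemidef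
      (Matrix.fromBlocks ((3 * ε ^ 3 / (V₀ ^ 3 * p₀ ^ 3)) • A) 0 0
          ((3 * ε / (V₀ * p₀)) • B) - P)
    ∧ P.PosDef := by
  intro p₀ A B P
  have hP2 : (0:ℝ) ≤ ∑ i, p i ^ 2 := Finset.sum_nonneg fun i _ => sq_nonneg _
  have hpp : ∑ i, p i ^ 2 = p ⬝ᵥ p := by simp [dotProduct, sq]
  have hq0 : (0:ℝ) < 1 + ∑ i, p i ^ 2 := by linarith
  have hp₀ : 0 < p₀ := Real.sqrt_pos.mpr hq0
  have hp₀sq : p₀ ^ 2 = 1 + p ⬝ᵥ p := by rw [← hpp]; exact Real.sq_sqrt hq0.le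
  have hV : 0 < V₀ := lt_of_lt_of_le one_pos hV₀
  have ha : 0 < ε ^ 3 / (V₀ ^ 3 * p₀ ^ 3) := by positivity
  have hc : 0 < ε / (V₀ * p₀) := by positivity
  have hb2 : (ε ^ 2 / (V₀ ^ 2 * p₀ ^ 2)) ^ 2
      = ε ^ 3 / (V₀ ^ 3 * p₀ ^ 3) * (ε / (V₀ * p₀)) := by
    field_simp
  have hA : A = (1 : Matrix (Fin d) (Fin d) ℝ) - (1 / p₀ ^ 2) • Matrix.vecMulVec p p := rfl
  have hB : B = (1 : Matrix (Fin d) (Fin d) ℝ) + Matrix.vecMulVec p p := rfl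
  have hpsd1 := blocks_psd (q := p₀ ^ 2) (a := ε ^ 3 / (V₀ ^ 3 * p₀ ^ 3))
    (b := ε ^ 2 / (V₀ ^ 2 * p₀ ^ 2)) (c := ε / (V₀ * p₀)) p hp₀sq ha.le hc.le hb2.le
  have hpsd2 := blocks_psd (q := p₀ ^ 2) (a := ε ^ 3 / (V₀ ^ 3 * p₀ ^ 3))
    (b := -(ε ^ 2 / (V₀ ^ 2 * p₀ ^ 2))) (c := ε / (V₀ * p₀)) p hp₀sq ha.le hc.le
    (by rw [neg_sq]; exact hb2.le)
  have hpd := blocks_pd (q := p₀ ^ 2) (a := ε ^ 3 / (V₀ ^ 3 * p₀ ^ 3))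
    (c := ε / (V₀ * p₀)) p hp₀sq ha hc
  rw [← hA, ← hB] at hpsd1 hpsd2 hpd
  have ePsplit : P = Matrix.fromBlocks ((ε ^ 3 / (V₀ ^ 3 * p₀ ^ 3)) • A) 0 0
        ((ε / (V₀ * p₀)) • B)
      + Matrix.fromBlocks ((ε ^ 3 / (V₀ ^ 3 * p₀ ^ 3)) • A)
        ((ε ^ 2 / (V₀ ^ 2 * p₀ ^ 2)) • (1 : Matrix (Fin d) (Fin d) ℝ))
        ((ε ^ 2 / (V₀ ^ 2 * p₀ ^ 2)) • (1 : Matrix (Fin d) (Fin d) ℝ))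
        ((ε / (V₀ * p₀)) • B) := by
    ext i j
    rcases i with i | i <;> rcases j with j | j <;>
      simp [P, Matrix.add_apply, Matrix.smul_apply, smul_eq_mul] <;> ring
  have e3 : Matrix.fromBlocks ((3 * ε ^ 3 / (V₀ ^ 3 * p₀ ^ 3)) • A) 0 0
        ((3 * ε / (V₀ * p₀)) • B)
      = P + Matrix.fromBlocks ((ε ^ 3 / (V₀ ^ 3 * p₀ ^ 3)) • A)
        ((-(ε ^ 2 / (V₀ ^ 2 * p₀ ^ 2))) • (1 : Matrix (Fin d) (Fin d) ℝ))
        ((-(ε ^ 2 / (V₀ ^ 2 * p₀ ^ 2))) • (1 : Matrix (Fin d) (Fin d) ℝ))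
        ((ε / (V₀ * p₀)) • B) := by
    ext i j
    rcases i with i | i <;> rcases j with j | j <;>
      simp [P, Matrix.add_apply, Matrix.smul_apply, smul_eq_mul] <;> ring
  refine ⟨?_, ?_, ?_⟩
  · rw [ePsplit, add_sub_cancel_left]
    exact hpsd1
  · rw [e3, add_sub_cancel_left]
    exact hpsd2
  · rw [ePsplit]
    exact Matrix.PosDef.add_posSemidef hpd hpsd1
end
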